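/- Let Ψ = {ψ_i}_{i=1}^M be a Parseval frame for F^N with ψ_M = 0 and ψ_{M−1} ≠ 0. Define Γ = {γ_i} by γ_i = ψ_i for i ≤ M−2 and γ_{M−1} = γ_M = ψ_{M−1}/√2. Then Γ is a Parseval frame and TC(Γ) > TC(Ψ). In particular, no Parseval frame containing a zero vector maximizes total coherence. -/

import Mathlib

open Matrix Finset

noncomputable def totalCoherence {N M : ℕ} (Φ : Matrix (Fin N) (Fin M) ℂ) : ℝ :=
  ∑ i, ∑ j ∈ Finset.univ.erase i, ‖(Φᴴ * Φ) i j‖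

private lemma split_sum2 {α β : Type*} [DecidableEq α] [AddCommMonoid β]
    (s : Finset α) (x y : α) (hx : x ∈ s) (hy : y ∈ s) (hxy : x ≠ y) (f : α → β) :
    ∑ i ∈ s, f i = f x + f y + ∑ i ∈ (s.erase x).erase y, f i := by
  rw [← Finset.add_sum_erase _ f hx,
    ← Finset.add_sum_erase _ f (Finset.mem_erase.mpr ⟨hxy.symm, hy⟩), add_assoc]

/-- Replacing a zero vector of a Parseval frame by half of a nonzero vector strictly increases
the total coherence; in particular no Parseval frame containing a zero vector maximizes the
total coherence. -/
theorem zero_vector_not_optimal {N M : ℕ}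
    (Ψ Γ : Matrix (Fin N) (Fin M) ℂ) (p q : Fin M) (hpq : p ≠ q)
    (hΨ : Ψ * Ψᴴ = 1)
    (hq : ∀ n, Ψ n q = 0) (hp : ∃ n, Ψ n p ≠ 0)
    (hΓ : ∀ n j, Γ n j = if j = p ∨ j = q then Ψ n p / (Real.sqrt 2 : ℂ) else Ψ n j) :
    Γ * Γᴴ = 1 ∧ totalCoherence Ψ < totalCoherence Γ ∧
      ¬ (∀ Θ : Matrix (Fin N) (Fin M) ℂ, Θ * Θᴴ = 1 →
          totalCoherence Θ ≤ totalCoherence Ψ) := by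
  classical
  -- facts about √2
  have smul : Real.sqrt 2 * Real.sqrt 2 = 2 := Real.mul_self_sqrt (by norm_num)
  have spos : (0:ℝ) < Real.sqrt 2 := Real.sqrt_pos.mpr (by norm_num)
  have sle2 : Real.sqrt 2 ≤ 2 := by nlinarith
  have hsC : ((Real.sqrt 2 : ℝ):ℂ) ≠ 0 := by exact_mod_cast spos.ne'
  have hconjs : (starRingEnd ℂ) ((Real.sqrt 2 : ℝ):ℂ) = ((Real.sqrt 2:ℝ):ℂ) :=
    Complex.conj_ofReal _
  have hssC : ((Real.sqrt 2:ℝ):ℂ) * ((Real.sqrt 2:ℝ):ℂ) = 2 := by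
    rw [← Complex.ofReal_mul, smul]; norm_num
  have hinv : (((Real.sqrt 2:ℝ):ℂ))⁻¹ * (((Real.sqrt 2:ℝ):ℂ))⁻¹ = 2⁻¹ := by
    rw [← mul_inv, hssC]
  have habs_s : ‖((Real.sqrt 2:ℝ):ℂ)‖ = Real.sqrt 2 := by
    rw [Complex.norm_real, Real.norm_eq_abs, abs_of_pos spos]
  -- entry formulas
  have hA : ∀ i j, (Ψᴴ * Ψ) i j = ∑ n, (starRingEnd ℂ) (Ψ n i) * Ψ n j := by
    intro i j; simp [Matrix.mul_apply, Matrix.conjTranspose_apply]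
  have hBe : ∀ i j, (Γᴴ * Γ) i j = ∑ n, (starRingEnd ℂ) (Γ n i) * Γ n j := by
    intro i j; simp [Matrix.mul_apply, Matrix.conjTranspose_apply]
  have hAq1 : ∀ i, (Ψᴴ * Ψ) i q = 0 := by intro i; rw [hA]; simp [hq]
  have hAq2 : ∀ j, (Ψᴴ * Ψ) q j = 0 := by intro j; rw [hA]; simp [hq]
  -- B entries
  have hBoth : ∀ i j, i ≠ p → i ≠ q → j ≠ p → j ≠ q → (Γᴴ * Γ) i j = (Ψᴴ * Ψ) i j := by
    intro i j hi1 hi2 hj1 hj2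
    rw [hBe, hA]
    refine Finset.sum_congr rfl fun n _ => ?_
    rw [hΓ, hΓ]; simp [hi1, hi2, hj1, hj2]
  have hBip : ∀ i, i ≠ p → i ≠ q → ∀ j, (j = p ∨ j = q) →
      (Γᴴ * Γ) i j = (Ψᴴ * Ψ) i p / (Real.sqrt 2 : ℂ) := by
    intro i hi1 hi2 j hj
    rw [hBe, hA, Finset.sum_div]
    refine Finset.sum_congr rfl fun n _ => ?_
    rw [hΓ, hΓ, if_pos hj, if_neg (by tauto), mul_div_assoc]
  have hBpj : ∀ i, (i = p ∨ i = q) → ∀ j, j ≠ p → j ≠ q →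
      (Γᴴ * Γ) i j = (Ψᴴ * Ψ) p j / (Real.sqrt 2 : ℂ) := by
    intro i hi j hj1 hj2
    rw [hBe, hA, Finset.sum_div]
    refine Finset.sum_congr rfl fun n _ => ?_
    rw [hΓ, hΓ, if_pos hi, if_neg (by tauto)]
    simp only [div_eq_mul_inv, _root_.map_mul, map_inv₀, hconjs]
    ring
  have hBpq : ∀ i, (i = p ∨ i = q) → ∀ j, (j = p ∨ j = q) →
      (Γᴴ * Γ) i j = (Ψᴴ * Ψ) p p / 2 := by
    intro i hi j hj
    rw [hBe, hA, Finset.sum_div]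
    refine Finset.sum_congr rfl fun n _ => ?_
    rw [hΓ, hΓ, if_pos hi, if_pos hj]
    simp only [div_eq_mul_inv, _root_.map_mul, map_inv₀, hconjs]
    rw [mul_mul_mul_comm, hinv]
  -- positivity of ⟨ψ_p, ψ_p⟩
  have hAppC : (Ψᴴ * Ψ) p p = ((∑ n, Complex.normSq (Ψ n p) : ℝ) : ℂ) := by
    rw [hA]
    push_cast
    exact Finset.sum_congr rfl fun n _ => (Complex.normSq_eq_conj_mul_self).symm ▸ rfl
  have happ_pos : 0 < ‖(Ψᴴ * Ψ) p p‖ := by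
    obtain ⟨n0, hn0⟩ := hp
    rw [hAppC, Complex.norm_real, Real.norm_eq_abs]
    have hpos : 0 < ∑ n, Complex.normSq (Ψ n p) :=
      Finset.sum_pos' (fun n _ => Complex.normSq_nonneg _)
        ⟨n0, Finset.mem_univ _, Complex.normSq_pos.mpr hn0⟩
    rwa [abs_of_pos hpos]
  -- Parseval for Γ
  have hΓΓ : Γ * Γᴴ = 1 := by
    rw [← hΨ]
    ext n m
    rw [Matrix.mul_apply, Matrix.mul_apply]
    simp only [Matrix.conjTranspose_apply, Complex.star_def]
    rw [split_sum2 Finset.univ p q (Finset.mem_univ p) (Finset.mem_univ q) hpq,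
        split_sum2 Finset.univ p q (Finset.mem_univ p) (Finset.mem_univ q) hpq]
    have hrest : ∑ j ∈ (Finset.univ.erase p).erase q, Γ n j * (starRingEnd ℂ) (Γ m j)
        = ∑ j ∈ (Finset.univ.erase p).erase q, Ψ n j * (starRingEnd ℂ) (Ψ m j) := by
      refine Finset.sum_congr rfl fun j hj => ?_
      have hj2 := Finset.mem_erase.mp hj
      have hj1 := Finset.mem_erase.mp hj2.2
      rw [hΓ, hΓ, if_neg (by tauto), if_neg (by tauto)]
    rw [hrest]
    have hGp : ∀ k, Γ k p = Ψ k p / ((Real.sqrt 2:ℝ):ℂ) := fun k => by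
      rw [hΓ]; exact if_pos (Or.inl rfl)
    have hGq : ∀ k, Γ k q = Ψ k p / ((Real.sqrt 2:ℝ):ℂ) := fun k => by
      rw [hΓ]; exact if_pos (Or.inr rfl)
    have h1 : ∀ a b : ℂ, a / ((Real.sqrt 2:ℝ):ℂ) * (starRingEnd ℂ) (b / ((Real.sqrt 2:ℝ):ℂ))
        = a * (starRingEnd ℂ) b * 2⁻¹ := by
      intro a b
      simp only [div_eq_mul_inv, _root_.map_mul, map_inv₀, hconjs]
      rw [mul_mul_mul_comm, hinv]
    simp only [hGp, hGq, hq, h1]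
    ring
  -- the total coherence strictly increases
  set a : Fin M → Fin M → ℝ := fun i j => ‖(Ψᴴ * Ψ) i j‖ with ha
  set b : Fin M → Fin M → ℝ := fun i j => ‖(Γᴴ * Γ) i j‖ with hb
  set T : Finset (Fin M) := (Finset.univ.erase p).erase q with hT
  set app : ℝ := ‖(Ψᴴ * Ψ) p p‖ with happ
  have hanonneg : ∀ i j, 0 ≤ a i j := fun i j => norm_nonneg _
  have sone : (1:ℝ) ≤ Real.sqrt 2 := by nlinarith
  have hqmem : q ∈ Finset.univ.erase p := Finset.mem_erase.mpr ⟨hpq.symm, Finset.mem_univ q⟩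
  have hpmem : p ∈ Finset.univ.erase q := Finset.mem_erase.mpr ⟨hpq, Finset.mem_univ p⟩
  have hT' : (Finset.univ.erase q).erase p = T := Finset.erase_right_comm
  -- row q of Ψ contributes nothing
  have hRqa : ∑ j ∈ Finset.univ.erase q, a q j = 0 :=
    Finset.sum_eq_zero fun j _ => by simp [ha, hAq2]
  -- row p of Ψ
  have hRpa : ∑ j ∈ Finset.univ.erase p, a p j = ∑ j ∈ T, a p j := by
    rw [← Finset.add_sum_erase _ _ hqmem]
    have : a p q = 0 := by simp [ha, hAq1]
    rw [this, zero_add]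
  -- rows p and q of Γ
  have hbT : ∀ j ∈ T, b p j = a p j / Real.sqrt 2 ∧ b q j = a p j / Real.sqrt 2 := by
    intro j hj
    have hj2 := Finset.mem_erase.mp hj
    have hj1 := Finset.mem_erase.mp hj2.2
    constructor
    · rw [hb]; simp only
      rw [hBpj p (Or.inl rfl) j hj1.1 hj2.1, norm_div, habs_s, ha]
    · rw [hb]; simp only
      rw [hBpj q (Or.inr rfl) j hj1.1 hj2.1, norm_div, habs_s, ha]
  have hRpb : ∑ j ∈ Finset.univ.erase p, b p j = app / 2 + ∑ j ∈ T, a p j / Real.sqrt 2 := by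
    rw [← Finset.add_sum_erase _ _ hqmem]
    congr 1
    · rw [hb]; simp only
      rw [hBpq p (Or.inl rfl) q (Or.inr rfl), norm_div, Complex.norm_two, happ]
    · exact Finset.sum_congr rfl fun j hj => (hbT j hj).1
  have hRqb : ∑ j ∈ Finset.univ.erase q, b q j = app / 2 + ∑ j ∈ T, a p j / Real.sqrt 2 := by
    rw [← Finset.add_sum_erase _ _ hpmem, hT']
    congr 1
    · rw [hb]; simp only
      rw [hBpq q (Or.inr rfl) p (Or.inl rfl), norm_div, Complex.norm_two, happ]
    · exact Finset.sum_congr rfl fun j hj => (hbT j hj).2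
  -- other rows
  have hrow : ∀ i ∈ T, (∑ j ∈ Finset.univ.erase i, a i j) ≤ ∑ j ∈ Finset.univ.erase i, b i j := by
    intro i hi
    have hi2 := Finset.mem_erase.mp hi
    have hi1 := Finset.mem_erase.mp hi2.2
    have hpmem' : p ∈ Finset.univ.erase i :=
      Finset.mem_erase.mpr ⟨(hi1.1).symm, Finset.mem_univ p⟩
    have hqmem' : q ∈ Finset.univ.erase i :=
      Finset.mem_erase.mpr ⟨(hi2.1).symm, Finset.mem_univ q⟩
    rw [split_sum2 _ p q hpmem' hqmem' hpq, split_sum2 _ p q hpmem' hqmem' hpq]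
    have hrest : ∑ j ∈ ((Finset.univ.erase i).erase p).erase q, a i j
        = ∑ j ∈ ((Finset.univ.erase i).erase p).erase q, b i j := by
      refine Finset.sum_congr rfl fun j hj => ?_
      have hj2 := Finset.mem_erase.mp hj
      have hj1 := Finset.mem_erase.mp hj2.2
      rw [ha, hb]; simp only
      rw [hBoth i j hi1.1 hi2.1 hj1.1 hj2.1]
    rw [← hrest]
    have haiq : a i q = 0 := by simp [ha, hAq1]
    have hbip : b i p = a i p / Real.sqrt 2 := by
      rw [hb]; simp only; rw [hBip i hi1.1 hi2.1 p (Or.inl rfl), norm_div, habs_s, ha]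
    have hbiq : b i q = a i p / Real.sqrt 2 := by
      rw [hb]; simp only; rw [hBip i hi1.1 hi2.1 q (Or.inr rfl), norm_div, habs_s, ha]
    rw [haiq, hbip, hbiq]
    have h0 := hanonneg i p
    have : a i p + 0 ≤ a i p / Real.sqrt 2 + a i p / Real.sqrt 2 := by
      rw [add_zero, ← add_div, le_div_iff₀ spos]
      nlinarith
    linarith
  have hcross : ∑ j ∈ T, a p j ≤ (∑ j ∈ T, a p j / Real.sqrt 2) + ∑ j ∈ T, a p j / Real.sqrt 2 := by
    rw [← Finset.sum_add_distrib]
    refine Finset.sum_le_sum fun j _ => ?_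
    rw [← add_div, le_div_iff₀ spos]
    nlinarith [hanonneg p j]
  have hsumT : (∑ i ∈ T, ∑ j ∈ Finset.univ.erase i, a i j)
      ≤ ∑ i ∈ T, ∑ j ∈ Finset.univ.erase i, b i j := Finset.sum_le_sum hrow
  have hlt : totalCoherence Ψ < totalCoherence Γ := by
    unfold totalCoherence
    rw [split_sum2 Finset.univ p q (Finset.mem_univ p) (Finset.mem_univ q) hpq
        (fun i => ∑ j ∈ Finset.univ.erase i, a i j),
      split_sum2 Finset.univ p q (Finset.mem_univ p) (Finset.mem_univ q) hpq
        (fun i => ∑ j ∈ Finset.univ.erase i, b i j)]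
    rw [hRqa, hRpa, hRpb, hRqb]
    have := happ_pos
    linarith
  refine ⟨hΓΓ, hlt, fun h => absurd (h Γ hΓΓ) (not_le.mpr hlt)⟩
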